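/- arXiv:0807.2332 — 8 statements merged into one kernel-verified Lean document; each statement's English description precedes it below -/
import Mathlib

section
/- An odd composite number n coprime to a is overpseudoprime to base a (i.e. n = r_a(n)·h_a(n) + 1) if and only if every divisor d > 1 of n satisfies h_a(d) = h_a(n), where h_a denotes multiplicative order of a. -/
private lemma opp_cast_pow_eq_one {a d t : ℕ} :
    (a : ZMod d) ^ t = 1 ↔ a ^ t ≡ 1 [MOD d] := by
  rw [← Nat.cast_pow, ← Nat.cast_one, ZMod.natCast_eq_natCast_iff]

private lemma opp_ord_pos {a d : ℕ} (hd : 1 < d) (hcop : a.Coprime d) :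
    0 < orderOf (a : ZMod d) := by
  haveI : NeZero d := ⟨by omega⟩
  have hu : IsUnit (a : ZMod d) := (ZMod.isUnit_iff_coprime a d).2 hcop
  obtain ⟨u, hu⟩ := hu
  rw [← hu, orderOf_units]
  exact orderOf_pos u

private lemma opp_ord_dvd {a d n : ℕ} (hdn : d ∣ n) :
    orderOf (a : ZMod d) ∣ orderOf (a : ZMod n) := by
  rw [orderOf_dvd_iff_pow_eq_one, opp_cast_pow_eq_one]
  have h1 : (a : ZMod n) ^ orderOf (a : ZMod n) = 1 := pow_orderOf_eq_one _
  rw [opp_cast_pow_eq_one] at h1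
  exact h1.of_dvd hdn

private lemma opp_key {a n x t : ℕ} (ha : 0 < a) (hn : 0 < n) :
    (a ^ t * x ≡ x [MOD n]) ↔ orderOf (a : ZMod (n / Nat.gcd n x)) ∣ t := by
  set g := Nat.gcd n x with hg
  have hgpos : 0 < g := Nat.gcd_pos_of_pos_left _ hn
  have hgd : g ∣ n := Nat.gcd_dvd_left n x
  have hgx : g ∣ x := Nat.gcd_dvd_right n x
  have hcop2 : Nat.Coprime (n / g) (x / g) := Nat.coprime_div_gcd_div_gcd hgpos
  have hat : 0 < a ^ t := Nat.pow_pos ha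
  rw [orderOf_dvd_iff_pow_eq_one, opp_cast_pow_eq_one, Nat.ModEq.comm,
    Nat.modEq_iff_dvd' (Nat.le_mul_of_pos_left x hat), Nat.ModEq.comm,
    Nat.modEq_iff_dvd' hat]
  have h1 : a ^ t * x - x = (a ^ t - 1) * x := by
    rw [Nat.sub_mul, one_mul]
  rw [h1]
  clear_value g
  obtain ⟨c, hc⟩ := hgd
  obtain ⟨e, he⟩ := hgx
  have hcval : n / g = c := by rw [hc]; exact Nat.mul_div_cancel_left _ hgpos
  have heval : x / g = e := by rw [he]; exact Nat.mul_div_cancel_left _ hgpos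
  rw [hcval] at hcop2 ⊢
  rw [heval] at hcop2
  rw [hc, he]
  have h2 : (a ^ t - 1) * (g * e) = g * ((a ^ t - 1) * e) := by ring
  rw [h2, Nat.mul_dvd_mul_iff_left hgpos]
  constructor
  · exact fun hdvd => hcop2.dvd_of_dvd_mul_right hdvd
  · exact fun hdvd => Dvd.dvd.mul_right hdvd e

/-- An odd composite `n` coprime to `a` satisfies `n = r_a(n)·h_a(n) + 1`
(overpseudoprime to base `a`), where `r_a(n)` is the number of cyclotomic cosets of `a`
mod `n` and `h_a(n) = ord_n(a)`, if and only if every divisor `d > 1` of `n` has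
`ord_d(a) = ord_n(a)`. -/
theorem overpseudoprime_iff (a n : ℕ) (ha : 1 < a) (hn : 1 < n) (hodd : Odd n)
    (hcomp : ¬ n.Prime) (hcop : Nat.Coprime a n) (r : ℕ)
    (hr : r = Set.ncard {S : Set ℕ | ∃ x, 0 < x ∧ x < n ∧
        S = Set.range (fun k : ℕ => a ^ k * x % n)}) :
    n = r * orderOf (a : ZMod n) + 1 ↔
      ∀ d, d ∣ n → 1 < d → orderOf (a : ZMod d) = orderOf (a : ZMod n) := by
  classical
  have ha0 : 0 < a := by omega
  have hn0 : 0 < n := by omega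
  set h := orderOf (a : ZMod n) with hh
  have hhpos : 0 < h := opp_ord_pos hn hcop
  set F : ℕ → Set ℕ := fun x => Set.range (fun k : ℕ => a ^ k * x % n) with hF
  set p : ℕ → ℕ := fun x => orderOf (a : ZMod (n / Nat.gcd n x)) with hp
  -- basic facts about d x := n / gcd n x
  have hddvd : ∀ x, (n / Nat.gcd n x) ∣ n := fun x =>
    Nat.div_dvd_of_dvd (Nat.gcd_dvd_left n x)
  have hdgt : ∀ x, 0 < x → x < n → 1 < n / Nat.gcd n x := by
    intro x hx hxn
    have hgx : Nat.gcd n x ≤ x := Nat.le_of_dvd hx (Nat.gcd_dvd_right n x)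
    obtain ⟨c, hc⟩ := Nat.gcd_dvd_left n x
    have hgpos : 0 < Nat.gcd n x := Nat.gcd_pos_of_pos_left _ hn0
    have hc' : n = c * Nat.gcd n x := by rw [mul_comm]; exact hc
    have hcval : n / Nat.gcd n x = c := Nat.div_eq_of_eq_mul_left hgpos hc'
    rw [hcval]
    nlinarith [hgpos, hgx, hxn, hc]
  have hppos : ∀ x, 0 < x → x < n → 0 < p x := by
    intro x hx hxn
    exact opp_ord_pos (hdgt x hx hxn) (hcop.coprime_dvd_right (hddvd x))
  have hpdvd : ∀ x, p x ∣ h := fun x => opp_ord_dvd (hddvd x)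
  -- key: a^t * x ≡ x [MOD n] ↔ p x ∣ t
  have hkey : ∀ x t : ℕ, (a ^ t * x ≡ x [MOD n]) ↔ p x ∣ t := fun x t =>
    opp_key ha0 hn0
  -- φ composition: a^m * (a^k*x % n) % n = a^(m+k)*x % n
  have hcomp2 : ∀ x m k : ℕ, a ^ m * (a ^ k * x % n) % n = a ^ (m + k) * x % n := by
    intro x m k
    conv_lhs => rw [Nat.mul_mod, Nat.mod_mod_of_dvd _ dvd_rfl, ← Nat.mul_mod]
    rw [← mul_assoc, ← pow_add]
  -- periodicity
  have hper : ∀ x, 0 < x → x < n → ∀ k, a ^ k * x % n = a ^ (k % p x) * x % n := by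
    intro x hx hxn k
    have hpx := hppos x hx hxn
    have h1 : a ^ (p x * (k / p x)) * x ≡ x [MOD n] :=
      (hkey x _).2 ⟨k / p x, rfl⟩
    have h2 : a ^ k * x ≡ a ^ (k % p x) * x [MOD n] := by
      calc a ^ k * x = a ^ (k % p x) * (a ^ (p x * (k / p x)) * x) := by
            rw [← mul_assoc, ← pow_add, Nat.mod_add_div]
        _ ≡ a ^ (k % p x) * x [MOD n] := h1.mul_left _
    exact h2
  -- orbit finset
  set O : ℕ → Finset ℕ := fun x => (Finset.range (p x)).image (fun k => a ^ k * x % n)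
    with hO
  have hFO : ∀ x, 0 < x → x < n → F x = ↑(O x) := by
    intro x hx hxn
    ext y
    simp only [hF, Set.mem_range, hO, Finset.coe_image, Finset.coe_range, Set.mem_image,
      Set.mem_Iio]
    constructor
    · rintro ⟨k, rfl⟩
      exact ⟨k % p x, Nat.mod_lt _ (hppos x hx hxn), (hper x hx hxn k).symm⟩
    · rintro ⟨k, _, rfl⟩
      exact ⟨k, rfl⟩
  have hcardO : ∀ x, 0 < x → x < n → (O x).card = p x := by
    intro x hx hxn
    rw [hO]
    rw [Finset.card_image_of_injOn, Finset.card_range]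
    intro i hi j hj hij
    simp only [Finset.coe_range, Set.mem_Iio] at hi hj
    -- wlog i ≤ j
    rcases le_total i j with hle | hle
    · have : a ^ i * (a ^ (j - i) * x) ≡ a ^ i * x [MOD n] := by
        rw [← mul_assoc, ← pow_add]
        have : i + (j - i) = j := by omega
        rw [this]
        exact (Nat.ModEq.symm (by unfold Nat.ModEq; exact hij))
      have h3 : a ^ (j - i) * x ≡ x [MOD n] :=
        this.cancel_left_of_coprime (hcop.pow_left i).symm
      have := (hkey x _).1 h3
      rcases Nat.eq_zero_or_pos (j - i) with h0 | h0
      · omega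
      · have := Nat.le_of_dvd h0 this
        omega
    · have : a ^ j * (a ^ (i - j) * x) ≡ a ^ j * x [MOD n] := by
        rw [← mul_assoc, ← pow_add]
        have : j + (i - j) = i := by omega
        rw [this]
        exact (by unfold Nat.ModEq; exact hij)
      have h3 : a ^ (i - j) * x ≡ x [MOD n] :=
        this.cancel_left_of_coprime (hcop.pow_left j).symm
      have := (hkey x _).1 h3
      rcases Nat.eq_zero_or_pos (i - j) with h0 | h0
      · omega
      · have := Nat.le_of_dvd h0 this
        omega
  -- membership and orbit equality
  have hmem_self : ∀ x, x < n → x ∈ F x := by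
    intro x hxn
    exact ⟨0, by simp [Nat.mod_eq_of_lt hxn]⟩
  have hFsub : ∀ x y, (∃ k, y = a ^ k * x % n) → F y ⊆ F x := by
    rintro x y ⟨k, rfl⟩ z ⟨m, rfl⟩
    exact ⟨m + k, (hcomp2 x m k).symm⟩
  have horbit_eq : ∀ x, 0 < x → x < n → ∀ y, y ∈ F x → (F y = F x ∧ 0 < y ∧ y < n) := by
    intro x hx hxn y hy
    obtain ⟨k, hk⟩ := hy
    have hkk : y = a ^ k * x % n := hk.symm
    have hyn : y < n := by rw [hkk]; exact Nat.mod_lt _ hn0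
    have hy0 : 0 < y := by
      rcases Nat.eq_zero_or_pos y with h0 | h0
      · exfalso
        rw [h0] at hkk
        have : n ∣ a ^ k * x := Nat.dvd_of_mod_eq_zero hkk.symm
        have : n ∣ x := (Nat.Coprime.symm (hcop.pow_left k)).dvd_of_dvd_mul_left this
        have := Nat.le_of_dvd hx this
        omega
      · exact h0
    refine ⟨?_, hy0, hyn⟩
    have hsub1 : F y ⊆ F x := hFsub x y ⟨k, hkk⟩
    -- x ∈ F y : x = a^(k*h - k) * y % n
    have hxFy : x ∈ F y := by
      have hm : a ^ (k * h - k) * y % n = a ^ (k * h - k + k) * x % n := by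
        rw [hkk]; exact hcomp2 x _ k
      have hkh : k * h - k + k = k * h := by
        have : k ≤ k * h := Nat.le_mul_of_pos_right _ hhpos
        omega
      have hmod : a ^ (k * h) * x ≡ x [MOD n] := by
        have h1 : a ^ h ≡ 1 [MOD n] := by
          rw [← opp_cast_pow_eq_one]; exact pow_orderOf_eq_one _
        have h2 : a ^ (k * h) ≡ 1 [MOD n] := by
          rw [mul_comm, pow_mul]
          calc (a ^ h) ^ k ≡ 1 ^ k [MOD n] := h1.pow k
            _ = 1 := one_pow k
        calc a ^ (k * h) * x ≡ 1 * x [MOD n] := h2.mul_right x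
          _ = x := one_mul x
      refine ⟨k * h - k, ?_⟩
      show a ^ (k * h - k) * y % n = x
      rw [hm, hkh]
      have : a ^ (k * h) * x % n = x % n := hmod
      rw [this, Nat.mod_eq_of_lt hxn]
    have hsub2 : F x ⊆ F y := by
      obtain ⟨m, hm⟩ := hxFy
      exact hFsub y x ⟨m, hm.symm⟩
    exact le_antisymm hsub1 hsub2
  -- fibers
  set I : Finset ℕ := Finset.Ioo 0 n with hI
  have hIcard : I.card = n - 1 := by simp [hI]
  have hfib : ∀ x ∈ I, (I.filter (fun y => F y = F x)) = O x := by
    intro x hxI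
    rw [hI, Finset.mem_Ioo] at hxI
    obtain ⟨hx, hxn⟩ := hxI
    ext y
    simp only [Finset.mem_filter, hI, Finset.mem_Ioo]
    constructor
    · rintro ⟨⟨hy0, hyn⟩, hFy⟩
      have : y ∈ F x := hFy ▸ hmem_self y hyn
      rw [hFO x hx hxn] at this
      exact this
    · intro hy
      have hyF : y ∈ F x := by rw [hFO x hx hxn]; exact hy
      obtain ⟨hFeq, hy0, hyn⟩ := horbit_eq x hx hxn y hyF
      exact ⟨⟨hy0, hyn⟩, hFeq⟩
  set T : Finset (Set ℕ) := I.image F with hT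
  have hrT : r = T.card := by
    rw [hr]
    congr 1
    have : {S : Set ℕ | ∃ x, 0 < x ∧ x < n ∧ S = F x} = ↑T := by
      ext S
      simp only [Set.mem_setOf_eq, hT, Finset.coe_image, Set.mem_image, Finset.mem_coe,
        hI, Finset.mem_Ioo]
      constructor
      · rintro ⟨x, hx, hxn, rfl⟩; exact ⟨x, ⟨hx, hxn⟩, rfl⟩
      · rintro ⟨x, ⟨hx, hxn⟩, rfl⟩; exact ⟨x, hx, hxn, rfl⟩
    rw [this, Set.ncard_coe_finset]
  have hsum : I.card = ∑ S ∈ T, (I.filter (fun y => F y = S)).card :=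
    Finset.card_eq_sum_card_fiberwise (fun x hx => Finset.mem_image_of_mem F hx)
  have hfibcard : ∀ x ∈ I, (I.filter (fun y => F y = F x)).card = p x := by
    intro x hxI
    have hxI' := hxI
    rw [hI, Finset.mem_Ioo] at hxI'
    rw [hfib x hxI]
    exact hcardO x hxI'.1 hxI'.2
  constructor
  · -- n = r*h + 1 → all orders equal
    intro heq d hdn hd1
    have hple : ∀ S ∈ T, (I.filter (fun y => F y = S)).card ≤ h := by
      intro S hS
      obtain ⟨x, hxI, rfl⟩ := Finset.mem_image.1 hS
      rw [hfibcard x hxI]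
      exact Nat.le_of_dvd hhpos (hpdvd x)
    have htot : ∑ S ∈ T, (I.filter (fun y => F y = S)).card = T.card * h := by
      rw [← hsum, hIcard]
      rw [hrT] at heq
      omega
    have hall : ∀ S ∈ T, (I.filter (fun y => F y = S)).card = h := by
      by_contra hcon
      push_neg at hcon
      obtain ⟨S0, hS0, hne⟩ := hcon
      have hlt : (I.filter (fun y => F y = S0)).card < h :=
        lt_of_le_of_ne (hple S0 hS0) hne
      have : ∑ S ∈ T, (I.filter (fun y => F y = S)).card < ∑ S ∈ T, h :=
        Finset.sum_lt_sum hple ⟨S0, hS0, hlt⟩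
      rw [Finset.sum_const, smul_eq_mul] at this
      omega
    -- apply to x = n / d
    set x := n / d with hx
    have hx0 : 0 < x := Nat.div_pos (Nat.le_of_dvd hn0 hdn) (by omega)
    have hxn : x < n := Nat.div_lt_self hn0 hd1
    have hxI : x ∈ I := by rw [hI, Finset.mem_Ioo]; exact ⟨hx0, hxn⟩
    have := hall (F x) (Finset.mem_image_of_mem F hxI)
    rw [hfibcard x hxI] at this
    have hgcd : Nat.gcd n x = x := Nat.gcd_eq_right (Nat.div_dvd_of_dvd hdn)
    have hdd : n / Nat.gcd n x = d := by
      rw [hgcd, hx, Nat.div_div_self hdn (by omega)]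
    simp only [hp] at this
    rw [hdd] at this
    exact this
  · -- all orders equal → n = r*h+1
    intro H
    have hall : ∀ S ∈ T, (I.filter (fun y => F y = S)).card = h := by
      intro S hS
      obtain ⟨x, hxI, rfl⟩ := Finset.mem_image.1 hS
      rw [hfibcard x hxI]
      have hxI' := hxI
      rw [hI, Finset.mem_Ioo] at hxI'
      exact H _ (hddvd x) (hdgt x hxI'.1 hxI'.2)
    have : I.card = T.card * h := by
      rw [hsum, Finset.sum_congr rfl hall, Finset.sum_const, smul_eq_mul]
    rw [hIcard, ← hrT] at this
    omega
end

section
/- If n₁ and n₂ are overpseudoprime to base a and h_a(n₁) ≠ h_a(n₂), then gcd(n₁, n₂) = 1. -/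
/-- `n` is overpseudoprime to base `a`: `n` is odd, composite, coprime to `a`, and every
divisor `d > 1` of `n` has `ord_d(a) = ord_n(a)`. -/
def Overpseudoprime (a n : ℕ) : Prop :=
  1 < n ∧ Odd n ∧ ¬ n.Prime ∧ Nat.Coprime a n ∧
    ∀ d, d ∣ n → 1 < d → orderOf (a : ZMod d) = orderOf (a : ZMod n)

/-- Two overpseudoprimes to base `a` with different orders `h_a` are coprime. -/
theorem overpseudoprime_coprime (a n₁ n₂ : ℕ) (ha : 1 < a)
    (h1 : Overpseudoprime a n₁) (h2 : Overpseudoprime a n₂)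
    (hne : orderOf (a : ZMod n₁) ≠ orderOf (a : ZMod n₂)) :
    Nat.Coprime n₁ n₂ := by
  by_contra hc
  have hn1 : 0 < n₁ := by have := h1.1; omega
  have hg1 : 1 < Nat.gcd n₁ n₂ := by
    have h0 : Nat.gcd n₁ n₂ ≠ 0 := Nat.gcd_ne_zero_left (by omega)
    have h1' : Nat.gcd n₁ n₂ ≠ 1 := hc
    omega
  have e1 := h1.2.2.2.2 _ (Nat.gcd_dvd_left n₁ n₂) hg1
  have e2 := h2.2.2.2.2 _ (Nat.gcd_dvd_right n₁ n₂) hg1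
  exact hne (e1 ▸ e2)
end

section
/- If p is prime, then 2^p − 1 is either prime or overpseudoprime to base 2; i.e., every divisor d > 1 of 2^p − 1 has multiplicative order of 2 modulo d equal to p. -/
/-- If `p` is prime, then `2^p - 1` is either prime or overpseudoprime to base 2:
every divisor `d > 1` of `2^p - 1` has multiplicative order of 2 mod `d` equal to `p`. -/
theorem mersenne_primover (p : ℕ) (hp : p.Prime) :
    ∀ d, d ∣ 2 ^ p - 1 → 1 < d → orderOf (2 : ZMod d) = p := by
  intro d hd hd1
  have hcast : ((2 ^ p - 1 : ℕ) : ZMod d) = 0 :=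
    (ZMod.natCast_eq_zero_iff _ _).mpr hd
  have hpow : (1:ℕ) ≤ 2 ^ p := Nat.one_le_two_pow
  have h1 : (2 : ZMod d) ^ p = 1 := by
    have he : (2:ℕ) ^ p = (2 ^ p - 1) + 1 := by omega
    have : ((2 ^ p : ℕ) : ZMod d) = ((2 ^ p - 1 : ℕ) : ZMod d) + 1 := by
      rw [he]; push_cast; ring
    rw [hcast, zero_add] at this
    push_cast at this
    exact this
  have hdvd : orderOf (2 : ZMod d) ∣ p := orderOf_dvd_of_pow_eq_one h1
  rcases hp.eq_one_or_self_of_dvd _ hdvd with h | h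
  · exfalso
    have h2 : (2 : ZMod d) = 1 := orderOf_eq_one_iff.mp h
    have h3 : ((1 : ℕ) : ZMod d) = 0 := by push_cast; linear_combination h2
    rw [ZMod.natCast_eq_zero_iff] at h3
    exact absurd (Nat.le_of_dvd one_pos h3) (by omega)
  · exact h
end

section
/- For every n ≥ 1, the Fermat number F_n = 2^(2^n) + 1 is primover to base 2: every divisor d > 1 of F_n satisfies ord_d(2) = 2^(n+1). -/
/-- For `n ≥ 1`, the Fermat number `F_n = 2^(2^n) + 1` is primover to base 2: every
divisor `d > 1` of `F_n` has `ord_d(2) = 2^(n+1)`. -/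
theorem fermat_primover (n : ℕ) (hn : 1 ≤ n) :
    ∀ d, d ∣ 2 ^ 2 ^ n + 1 → 1 < d → orderOf (2 : ZMod d) = 2 ^ (n + 1) := by
  intro d hd hd1
  -- d is odd, hence d ≥ 3
  have hodd : Odd (2 ^ 2 ^ n + 1) := by
    have : Even (2 ^ 2 ^ n : ℕ) :=
      (Nat.even_pow' (by positivity)).mpr even_two
    exact Even.add_one this
  have hdodd : Odd d := hodd.of_dvd_nat hd
  have h3 : 2 < d := by
    rcases Nat.lt_or_ge d 3 with h | h
    · interval_cases d
      · exact absurd hdodd (by decide)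
    · exact h
  haveI : Fact (2 < d) := ⟨h3⟩
  haveI : Fact (Nat.Prime 2) := ⟨Nat.prime_two⟩
  -- 2^(2^n) = -1 in ZMod d
  have hzero : ((2 ^ 2 ^ n + 1 : ℕ) : ZMod d) = 0 := (ZMod.natCast_eq_zero_iff _ _).mpr hd
  push_cast at hzero
  have hneg : (2 : ZMod d) ^ 2 ^ n = -1 := by linear_combination hzero
  have hnot : ¬ (2 : ZMod d) ^ 2 ^ n = 1 := by
    rw [hneg]
    exact ZMod.neg_one_ne_one
  have hsq : (2 : ZMod d) ^ 2 ^ (n + 1) = 1 := by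
    rw [pow_succ, pow_mul, hneg]
    ring
  exact orderOf_eq_prime_pow hnot hsq
end

section
/- Let a > 1 and let p < q be primes. Then N = (a−1)(a^(pq) − 1) / ((a^p − 1)(a^q − 1)) is an integer. -/
lemma gcd_dvd_sub_one (a p q : ℕ) (ha : 1 < a) (hpq : Nat.Coprime p q) :
    Nat.gcd (a ^ p - 1) (a ^ q - 1) ∣ a - 1 := by
  set d := Nat.gcd (a ^ p - 1) (a ^ q - 1) with hd
  have h1 : d ∣ a ^ p - 1 := Nat.gcd_dvd_left _ _
  have h2 : d ∣ a ^ q - 1 := Nat.gcd_dvd_right _ _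
  have hap : 1 ≤ a ^ p := Nat.one_le_pow _ _ (by omega)
  have haq : 1 ≤ a ^ q := Nat.one_le_pow _ _ (by omega)
  have e1 : ((a : ZMod d)) ^ p = 1 := by
    have : ((a ^ p - 1 : ℕ) : ZMod d) = 0 := (ZMod.natCast_eq_zero_iff _ _).mpr h1
    rw [Nat.cast_sub hap] at this
    push_cast at this
    linear_combination this
  have e2 : ((a : ZMod d)) ^ q = 1 := by
    have : ((a ^ q - 1 : ℕ) : ZMod d) = 0 := (ZMod.natCast_eq_zero_iff _ _).mpr h2
    rw [Nat.cast_sub haq] at this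
    push_cast at this
    linear_combination this
  have ho1 : orderOf ((a : ZMod d)) ∣ p := orderOf_dvd_of_pow_eq_one e1
  have ho2 : orderOf ((a : ZMod d)) ∣ q := orderOf_dvd_of_pow_eq_one e2
  have : orderOf ((a : ZMod d)) = 1 := Nat.Coprime.eq_one_of_dvd (Nat.Coprime.coprime_dvd_left ho1 hpq) ho2
  have ha1 : (a : ZMod d) = 1 := orderOf_eq_one_iff.mp this
  have : ((a - 1 : ℕ) : ZMod d) = 0 := by
    rw [Nat.cast_sub (by omega)]; push_cast; rw [ha1]; ring
  exact (ZMod.natCast_eq_zero_iff _ _).mp this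

/-- For `a > 1` and primes `p < q`, `(a^p - 1)(a^q - 1)` divides `(a - 1)(a^(pq) - 1)`,
i.e. `N = (a-1)(a^(pq)-1)/((a^p-1)(a^q-1))` is an integer. -/
theorem primover_quotient_integer (a p q : ℕ) (ha : 1 < a) (hp : p.Prime)
    (hq : q.Prime) (hpq : p < q) :
    (a ^ p - 1) * (a ^ q - 1) ∣ (a - 1) * (a ^ (p * q) - 1) := by
  have hco : Nat.Coprime p q := (Nat.coprime_primes hp hq).mpr (by omega)
  have hx : a ^ p - 1 ∣ a ^ (p * q) - 1 := by
    have := Nat.sub_dvd_pow_sub_pow (a ^ p) 1 q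
    simpa [← pow_mul, one_pow] using this
  have hy : a ^ q - 1 ∣ a ^ (p * q) - 1 := by
    have := Nat.sub_dvd_pow_sub_pow (a ^ q) 1 p
    simpa [← pow_mul, one_pow, mul_comm] using this
  have hlcm : Nat.lcm (a ^ p - 1) (a ^ q - 1) ∣ a ^ (p * q) - 1 := Nat.lcm_dvd hx hy
  calc (a ^ p - 1) * (a ^ q - 1)
      = Nat.gcd (a ^ p - 1) (a ^ q - 1) * Nat.lcm (a ^ p - 1) (a ^ q - 1) :=
        (Nat.gcd_mul_lcm _ _).symm
    _ ∣ (a - 1) * (a ^ (p * q) - 1) :=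
        mul_dvd_mul (gcd_dvd_sub_one a p q ha hco) hlcm
end

section
/- Let a > 1 and p < q be primes, and set N = (a−1)(a^(pq) − 1) / ((a^p − 1)(a^q − 1)). Then N is primover to base a (every divisor d > 1 of N satisfies ord_d(a) = pq) if and only if gcd(N, (a^p − 1)(a^q − 1)) = 1. -/
lemma aux_pow_cast_eq_one {a e d : ℕ} (ha : 0 < a) (h : d ∣ a ^ e - 1) :
    (a : ZMod d) ^ e = 1 := by
  obtain ⟨c, hc⟩ := h
  have h1 : 1 ≤ a ^ e := Nat.one_le_pow _ _ ha
  have he : a ^ e = d * c + 1 := by omega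
  calc (a : ZMod d) ^ e = ((a ^ e : ℕ) : ZMod d) := by push_cast; ring
    _ = ((d * c + 1 : ℕ) : ZMod d) := by rw [he]
    _ = 1 := by push_cast [ZMod.natCast_self]; ring

lemma aux_dvd_of_pow_cast_eq_one {a e d : ℕ} (ha : 0 < a) (hd : 1 < d)
    (h : (a : ZMod d) ^ e = 1) : d ∣ a ^ e - 1 := by
  haveI : NeZero d := ⟨by omega⟩
  have h1 : 1 ≤ a ^ e := Nat.one_le_pow _ _ ha
  have h2 : ((a ^ e : ℕ) : ZMod d) = 1 := by push_cast; exact h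
  have h3 : ((a ^ e - 1 : ℕ) : ZMod d) = 0 := by
    rw [Nat.cast_sub h1, h2]; simp
  exact (ZMod.natCast_eq_zero_iff _ _).mp h3

lemma aux_div_pq {e p q : ℕ} (hp : p.Prime) (hq : q.Prime) (h : e ∣ p * q) :
    e ∣ p ∨ e ∣ q ∨ e = p * q := by
  by_cases hpe : p ∣ e
  · obtain ⟨f, rfl⟩ := hpe
    have hf : f ∣ q := (mul_dvd_mul_iff_left hp.pos.ne').mp h
    rcases (Nat.Prime.eq_one_or_self_of_dvd hq f hf) with rfl | rfl
    · left; simp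
    · right; right; rfl
  · have hco : Nat.Coprime e p := (hp.coprime_iff_not_dvd.mpr hpe).symm
    right; left
    exact hco.dvd_of_dvd_mul_left h

/-- For `a > 1` and primes `p < q`, the integer
`N = (a-1)(a^(pq)-1)/((a^p-1)(a^q-1))` is primover to base `a` (every divisor `d > 1`
of `N` has `ord_d(a) = pq`) iff `gcd(N, (a^p-1)(a^q-1)) = 1`. -/
theorem primover_pq_iff (a p q N : ℕ) (ha : 1 < a) (hp : p.Prime) (hq : q.Prime)
    (hpq : p < q)
    (hN : N * ((a ^ p - 1) * (a ^ q - 1)) = (a - 1) * (a ^ (p * q) - 1)) :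
    (∀ d, d ∣ N → 1 < d → orderOf (a : ZMod d) = p * q) ↔
      Nat.Coprime N ((a ^ p - 1) * (a ^ q - 1)) := by
  have ha0 : 0 < a := by omega
  have hp2 : 2 ≤ p := hp.two_le
  have hq2 : 2 ≤ q := hq.two_le
  have hap : 1 < a ^ p := Nat.one_lt_pow (by omega) ha
  have haq : 1 < a ^ q := Nat.one_lt_pow (by omega) ha
  have hPpos : 0 < (a ^ p - 1) * (a ^ q - 1) := Nat.mul_pos (by omega) (by omega)
  -- N divides a^(pq) - 1
  have hsub : (a - 1) ∣ a ^ p - 1 := by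
    have := Nat.sub_dvd_pow_sub_pow a 1 p
    simpa using this
  obtain ⟨s, hs⟩ := hsub
  have hNd : N ∣ a ^ (p * q) - 1 := by
    have key : (a - 1) * (N * (s * (a ^ q - 1))) = (a - 1) * (a ^ (p * q) - 1) := by
      rw [← hN, hs]; ring
    have := Nat.eq_of_mul_eq_mul_left (by omega : 0 < a - 1) key
    exact ⟨s * (a ^ q - 1), this.symm⟩
  constructor
  · intro H
    by_contra hco
    have hgne : Nat.gcd N ((a ^ p - 1) * (a ^ q - 1)) ≠ 1 := hco
    have hg0 : Nat.gcd N ((a ^ p - 1) * (a ^ q - 1)) ≠ 0 := by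
      intro h0
      have := Nat.eq_zero_of_gcd_eq_zero_right h0
      omega
    set g := Nat.gcd N ((a ^ p - 1) * (a ^ q - 1)) with hg
    set r := g.minFac with hr
    have hrp : r.Prime := Nat.minFac_prime (by omega)
    have hrN : r ∣ N := (Nat.minFac_dvd g).trans (Nat.gcd_dvd_left _ _)
    have hrP : r ∣ (a ^ p - 1) * (a ^ q - 1) :=
      (Nat.minFac_dvd g).trans (Nat.gcd_dvd_right _ _)
    have hord : orderOf (a : ZMod r) = p * q := H r hrN hrp.one_lt
    rcases (Nat.Prime.dvd_mul hrp).mp hrP with hcase | hcase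
    · have : (a : ZMod r) ^ p = 1 := aux_pow_cast_eq_one ha0 hcase
      have hdvd : p * q ∣ p := hord ▸ orderOf_dvd_of_pow_eq_one this
      have := Nat.le_of_dvd (by omega) hdvd
      nlinarith
    · have : (a : ZMod r) ^ q = 1 := aux_pow_cast_eq_one ha0 hcase
      have hdvd : p * q ∣ q := hord ▸ orderOf_dvd_of_pow_eq_one this
      have := Nat.le_of_dvd (by omega) hdvd
      nlinarith
  · intro hco d hd hd1
    have hdvd : d ∣ a ^ (p * q) - 1 := hd.trans hNd
    have hone : (a : ZMod d) ^ (p * q) = 1 := aux_pow_cast_eq_one ha0 hdvd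
    have horddvd : orderOf (a : ZMod d) ∣ p * q := orderOf_dvd_of_pow_eq_one hone
    rcases aux_div_pq hp hq horddvd with h | h | h
    · exfalso
      have : (a : ZMod d) ^ p = 1 := orderOf_dvd_iff_pow_eq_one.mp h
      have hdp : d ∣ a ^ p - 1 := aux_dvd_of_pow_cast_eq_one ha0 hd1 this
      have : d ∣ Nat.gcd N ((a ^ p - 1) * (a ^ q - 1)) :=
        Nat.dvd_gcd hd (hdp.trans (dvd_mul_right _ _))
      rw [hco] at this
      have := Nat.dvd_one.mp this
      omega
    · exfalso
      have : (a : ZMod d) ^ q = 1 := orderOf_dvd_iff_pow_eq_one.mp h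
      have hdq : d ∣ a ^ q - 1 := aux_dvd_of_pow_cast_eq_one ha0 hd1 this
      have : d ∣ Nat.gcd N ((a ^ p - 1) * (a ^ q - 1)) :=
        Nat.dvd_gcd hd (hdq.trans (dvd_mul_left _ _))
      rw [hco] at this
      have := Nat.dvd_one.mp this
      omega
    · exact h
end

section
/- Let a > 1, p prime, and n ≥ 1, and set N = (a^(p^n) − 1)/(a^(p^(n−1)) − 1). Then N is primover to base a (every divisor d > 1 of N satisfies ord_d(a) = p^n) if and only if gcd(N, a^(p^(n−1)) − 1) = 1. -/
/-- For `a > 1`, `p` prime and `n ≥ 1`, the integer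
`N = (a^(p^n)-1)/(a^(p^(n-1))-1)` is primover to base `a` (every divisor `d > 1` of `N`
has `ord_d(a) = p^n`) iff `gcd(N, a^(p^(n-1)) - 1) = 1`. -/
theorem primover_prime_power_iff (a p n N : ℕ) (ha : 1 < a) (hp : p.Prime)
    (hn : 1 ≤ n)
    (hN : N * (a ^ p ^ (n - 1) - 1) = a ^ p ^ n - 1) :
    (∀ d, d ∣ N → 1 < d → orderOf (a : ZMod d) = p ^ n) ↔
      Nat.Coprime N (a ^ p ^ (n - 1) - 1) := by
  have key : ∀ d k : ℕ, ((a : ZMod d) ^ k = 1 ↔ d ∣ a ^ k - 1) := by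
    intro d k
    have h1 : (1 : ℕ) ≤ a ^ k := Nat.one_le_pow _ _ (by omega)
    rw [show ((a : ZMod d) ^ k) = ((a ^ k : ℕ) : ZMod d) by push_cast; ring,
      show (1 : ZMod d) = ((1 : ℕ) : ZMod d) by simp,
      ZMod.natCast_eq_natCast_iff]
    constructor
    · intro h; exact (Nat.modEq_iff_dvd' h1).mp h.symm
    · intro h; exact ((Nat.modEq_iff_dvd' h1).mpr h).symm
  have hMpos : 0 < a ^ p ^ (n - 1) - 1 := by
    have : 1 < a ^ p ^ (n - 1) := Nat.one_lt_pow (pow_pos hp.pos _).ne' ha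
    omega
  have hbig : 1 < a ^ p ^ n := Nat.one_lt_pow (pow_pos hp.pos _).ne' ha
  have hNpos : 0 < N := by
    rcases Nat.eq_zero_or_pos N with h | h
    · exfalso; rw [h, zero_mul] at hN; omega
    · exact h
  constructor
  · intro h
    by_contra hg
    set g := Nat.gcd N (a ^ p ^ (n - 1) - 1) with hgdef
    have hg1 : 1 < g := by
      have : 0 < g := Nat.gcd_pos_of_pos_left _ hNpos
      omega
    have hord : orderOf (a : ZMod g) = p ^ n := h g (Nat.gcd_dvd_left _ _) hg1
    have hdvdM : g ∣ a ^ p ^ (n - 1) - 1 := Nat.gcd_dvd_right _ _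
    have : orderOf (a : ZMod g) ∣ p ^ (n - 1) :=
      orderOf_dvd_of_pow_eq_one ((key g _).mpr hdvdM)
    rw [hord] at this
    have hle := Nat.le_of_dvd (pow_pos hp.pos _) this
    have : p ^ (n - 1) < p ^ n := Nat.pow_lt_pow_right hp.one_lt (by omega)
    omega
  · intro hcop d hd hd1
    have hdpn : d ∣ a ^ p ^ n - 1 := hd.trans ⟨_, hN.symm⟩
    have hpow : (a : ZMod d) ^ p ^ n = 1 := (key d _).mpr hdpn
    have hdvd : orderOf (a : ZMod d) ∣ p ^ n := orderOf_dvd_of_pow_eq_one hpow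
    obtain ⟨k, hk, hke⟩ := (Nat.dvd_prime_pow hp).mp hdvd
    rcases Nat.lt_or_ge k n with hkn | hkn
    · exfalso
      have : orderOf (a : ZMod d) ∣ p ^ (n - 1) := by
        rw [hke]; exact pow_dvd_pow p (by omega)
      have hdM : d ∣ a ^ p ^ (n - 1) - 1 :=
        (key d _).mp (orderOf_dvd_iff_pow_eq_one.mp this)
      have : d ∣ 1 := hcop ▸ Nat.dvd_gcd hd hdM
      have := Nat.le_of_dvd one_pos this
      omega
    · rw [hke]; congr 1; omega
end

section
/- If N > 1 is overpseudoprime to base 2 (every divisor d > 1 of N has ord_d(2) = ord_N(2)), then N is a Fermat pseudoprime to base 2, i.e., 2^(N−1) ≡ 1 (mod N). -/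
/-- If `N` is an odd composite with every divisor `d > 1` of `N` having
`ord_d(2) = ord_N(2)` (overpseudoprime to base 2), then `2^(N-1) ≡ 1 (mod N)`,
i.e. `N` is a Fermat pseudoprime to base 2. -/
theorem overpseudoprime_is_fermat_pseudoprime (N : ℕ) (hN : 1 < N) (hodd : Odd N)
    (hcomp : ¬ N.Prime)
    (h : ∀ d, d ∣ N → 1 < d → orderOf (2 : ZMod d) = orderOf (2 : ZMod N)) :
    2 ^ (N - 1) ≡ 1 [MOD N] := by
  set H := orderOf (2 : ZMod N) with hH
  -- every divisor of N is ≡ 1 mod H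
  have key : ∀ m, m ∣ N → m ≡ 1 [MOD H] := by
    intro m
    induction m using Nat.strong_induction_on with
    | _ m ih =>
      intro hmN
      have hm0 : m ≠ 0 := by
        rintro rfl
        exact absurd (Nat.eq_zero_of_zero_dvd hmN) (by omega)
      rcases eq_or_ne m 1 with rfl | hm1
      · rfl
      · set p := m.minFac with hp
        have hpp : p.Prime := Nat.minFac_prime hm1
        have hpm : p ∣ m := Nat.minFac_dvd m
        have hpN : p ∣ N := hpm.trans hmN
        have hp2 : p ≠ 2 := by
          intro hpe
          rw [hpe] at hpN
          rcases hodd with ⟨k, hk⟩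
          omega
        haveI : Fact p.Prime := ⟨hpp⟩
        have h2ne : (2 : ZMod p) ≠ 0 := by
          intro h0
          have hd : (p : ℕ) ∣ 2 :=
            (ZMod.natCast_eq_zero_iff 2 p).mp (by exact_mod_cast h0)
          exact hp2 ((Nat.prime_dvd_prime_iff_eq hpp Nat.prime_two).mp hd)
        have hfermat : (2 : ZMod p) ^ (p - 1) = 1 := ZMod.pow_card_sub_one_eq_one h2ne
        have hordp : orderOf (2 : ZMod p) = H := h p hpN hpp.one_lt
        have hHp : H ∣ p - 1 := hordp ▸ orderOf_dvd_of_pow_eq_one hfermat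
        have hpmod : p ≡ 1 [MOD H] := ((Nat.modEq_iff_dvd' hpp.one_lt.le).mpr hHp).symm
        have hrec : m / p ≡ 1 [MOD H] := by
          apply ih
          · exact Nat.div_lt_self (Nat.pos_of_ne_zero hm0) hpp.one_lt
          · exact (Nat.div_dvd_of_dvd hpm).trans hmN
        calc m = p * (m / p) := (Nat.mul_div_cancel' hpm).symm
          _ ≡ 1 * 1 [MOD H] := hpmod.mul hrec
          _ = 1 := by ring
  have hNmod : N ≡ 1 [MOD H] := key N dvd_rfl
  have hHdvd : H ∣ N - 1 := (Nat.modEq_iff_dvd' hN.le).mp hNmod.symm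
  obtain ⟨k, hk⟩ := hHdvd
  have : ((2 ^ (N - 1) : ℕ) : ZMod N) = ((1 : ℕ) : ZMod N) := by
    push_cast
    rw [hk, pow_mul, pow_orderOf_eq_one, one_pow]
  exact (ZMod.natCast_eq_natCast_iff _ _ _).mp this
end
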